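/- (Hayashi–Nagaoka operator inequality.) Let S and T be positive semidefinite operators on a finite-dimensional Hilbert space such that S ≤ 1 (i.e., 1 − S is positive semidefinite) and S + T is positive definite. Then for every constant c > 0, 1 − (S+T)^{−1/2} S (S+T)^{−1/2} ≤ (1+c)(1 − S) + (2 + c + c⁻¹) T, where ≤ is the Loewner order and (S+T)^{−1/2} is the inverse of the positive definite square root of S+T. -/

import Mathlib

open scoped Matrix Kronecker BigOperators
open Matrix
open scoped ComplexOrder Classical

namespace Paper

/-- Total positive semidefinite square root (junk value `0` off the PSD cone). -/
noncomputable def psqrt {n : Type*} [Fintype n] [DecidableEq n] (A : Matrix n n ℂ) :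
    Matrix n n ℂ :=
  if h : A.PosSemidef then
    (h.1.eigenvectorUnitary : Matrix n n ℂ) *
      Matrix.diagonal ((↑) ∘ (Real.sqrt ·) ∘ h.1.eigenvalues) *
      (star (h.1.eigenvectorUnitary : Matrix n n ℂ))
  else 0

/-- Trace norm `‖A‖₁ = Tr √(AᴴA)`. -/
noncomputable def traceNorm {n : Type*} [Fintype n] [DecidableEq n] (A : Matrix n n ℂ) : ℝ :=
  (psqrt (Aᴴ * A)).trace.re

/-- Fidelity `F(ρ,σ) = ‖√ρ√σ‖₁` of positive semidefinite matrices. -/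
noncomputable def fidelity {n : Type*} [Fintype n] [DecidableEq n] (ρ σ : Matrix n n ℂ) : ℝ :=
  traceNorm (psqrt ρ * psqrt σ)

/-- Purified distance `P(ρ,σ) = √(1 - F(ρ,σ)²)`. -/
noncomputable def purDist {n : Type*} [Fintype n] [DecidableEq n] (ρ σ : Matrix n n ℂ) : ℝ :=
  Real.sqrt (1 - fidelity ρ σ ^ 2)

/-- A state (density matrix): positive semidefinite with unit trace. -/
def IsState {n : Type*} [Fintype n] (ρ : Matrix n n ℂ) : Prop :=
  ρ.PosSemidef ∧ ρ.trace = 1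

/-- A probability mass function on a finite alphabet. -/
def IsPMF {X : Type*} [Fintype X] (p : X → ℝ) : Prop :=
  (∀ x, 0 ≤ p x) ∧ ∑ x, p x = 1

/-- Support inclusion `supp ρ ⊆ supp σ`, phrased via kernels (equivalent for PSD matrices). -/
def SuppSubset {n : Type*} [Fintype n] (ρ σ : Matrix n n ℂ) : Prop :=
  ∀ v : n → ℂ, σ.mulVec v = 0 → ρ.mulVec v = 0

/-- Loewner order `A ≤ B`. -/
def LLE {n : Type*} [Fintype n] (A B : Matrix n n ℂ) : Prop := (B - A).PosSemidef

/-- Binary logarithm of a Hermitian matrix, taken on its support via functional calculus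
(`Real.logb 2 0 = 0` takes care of the kernel). -/
noncomputable def matLog {n : Type*} [Fintype n] [DecidableEq n] (A : Matrix n n ℂ) :
    Matrix n n ℂ :=
  if hA : A.IsHermitian then
    (hA.eigenvectorUnitary : Matrix n n ℂ) *
      Matrix.diagonal (fun i => (Real.logb 2 (hA.eigenvalues i) : ℂ)) *
      (star (hA.eigenvectorUnitary : Matrix n n ℂ))
  else 0

/-- Quantum relative entropy (base 2): `D(ρ‖σ) = Tr(ρ log₂ ρ) - Tr(ρ log₂ σ)`. -/
noncomputable def relEnt {n : Type*} [Fintype n] [DecidableEq n] (ρ σ : Matrix n n ℂ) : ℝ :=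
  ((ρ * matLog ρ).trace - (ρ * matLog σ).trace).re

/-- Max-relative entropy `D_max(ρ‖σ) = inf {λ | ρ ≤ 2^λ σ}`. -/
noncomputable def dMax {n : Type*} [Fintype n] (ρ σ : Matrix n n ℂ) : ℝ :=
  sInf {l : ℝ | LLE ρ ((2 : ℝ) ^ l • σ)}

/-- Smooth max-relative entropy `D_max^ε(ρ‖σ) = min_{ρ' ∈ B^ε(ρ)} D_max(ρ'‖σ)`. -/
noncomputable def dMaxSmooth {n : Type*} [Fintype n] [DecidableEq n]
    (ε : ℝ) (ρ σ : Matrix n n ℂ) : ℝ :=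
  sInf {d : ℝ | ∃ ρ' : Matrix n n ℂ, IsState ρ' ∧ purDist ρ' ρ ≤ ε ∧ d = dMax ρ' σ}

/-- Partial trace over the second (B) factor. -/
noncomputable def ptraceB {a b : Type*} [Fintype b]
    (M : Matrix (a × b) (a × b) ℂ) : Matrix a a ℂ :=
  Matrix.of fun i j => ∑ k : b, M (i, k) (j, k)

/-- Partial trace over the first (A) factor. -/
noncomputable def ptraceA {a b : Type*} [Fintype a]
    (M : Matrix (a × b) (a × b) ℂ) : Matrix b b ℂ :=
  Matrix.of fun i j => ∑ k : a, M (k, i) (k, j)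

/-- The cq state `Σ_x p(x) |x⟩⟨x| ⊗ ρ_x`. -/
noncomputable def cqState {X d : Type*} [Fintype X] [DecidableEq X] [Fintype d] [DecidableEq d]
    (p : X → ℝ) (ρ : X → Matrix d d ℂ) : Matrix (X × d) (X × d) ℂ :=
  ∑ x, p x • (Matrix.single x x (1 : ℂ) ⊗ₖ ρ x)

/-- The Markov state `ρ^{A-X-B} = Σ_x p(x)|x⟩⟨x| ⊗ ρ_x^A ⊗ ρ_x^B` of a cq state. -/
noncomputable def markovState {X a b : Type*} [Fintype X] [DecidableEq X]
    [Fintype a] [DecidableEq a] [Fintype b] [DecidableEq b]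
    (p : X → ℝ) (ρ : X → Matrix (a × b) (a × b) ℂ) :
    Matrix (X × (a × b)) (X × (a × b)) ℂ :=
  cqState p fun x => ptraceB (ρ x) ⊗ₖ ptraceA (ρ x)

/-- Conditional mutual information `I(A;B|X)_ρ = D(ρ^{XAB} ‖ ρ^{A-X-B})` of a cq state. -/
noncomputable def condMI {X a b : Type*} [Fintype X] [DecidableEq X]
    [Fintype a] [DecidableEq a] [Fintype b] [DecidableEq b]
    (p : X → ℝ) (ρ : X → Matrix (a × b) (a × b) ℂ) : ℝ :=
  relEnt (cqState p ρ) (markovState p ρ)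

/-- `D_max^ε(A;B|X)_ρ = D_max^ε(ρ^{XAB} ‖ ρ^{A-X-B})` of a cq state. -/
noncomputable def condDmaxSmooth {X a b : Type*} [Fintype X] [DecidableEq X]
    [Fintype a] [DecidableEq a] [Fintype b] [DecidableEq b]
    (ε : ℝ) (p : X → ℝ) (ρ : X → Matrix (a × b) (a × b) ℂ) : ℝ :=
  dMaxSmooth ε (cqState p ρ) (markovState p ρ)

/-- `Ĩ_max^ε(A;B|X)_ρ`: minimum of `D_max(ρ' ‖ Σ_x p'(x)|x⟩⟨x| ⊗ ρ'^A_x ⊗ ρ^B_x)` over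
cq states `ρ'` in the ε-ball around `ρ^{XAB}`. -/
noncomputable def condImaxTilde {X a b : Type*} [Fintype X] [DecidableEq X]
    [Fintype a] [DecidableEq a] [Fintype b] [DecidableEq b]
    (ε : ℝ) (p : X → ℝ) (ρ : X → Matrix (a × b) (a × b) ℂ) : ℝ :=
  sInf {d : ℝ | ∃ (p' : X → ℝ) (ρ' : X → Matrix (a × b) (a × b) ℂ),
    IsPMF p' ∧ (∀ x, IsState (ρ' x)) ∧
    purDist (cqState p' ρ') (cqState p ρ) ≤ ε ∧
    d = dMax (cqState p' ρ') (cqState p' fun x => ptraceB (ρ' x) ⊗ₖ ptraceA (ρ x))}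

/-- `Ĩ_max^ε(A;B)_ρ = inf_{ρ' ∈ B^ε(ρ)} D_max(ρ' ‖ ρ'^A ⊗ ρ^B)` for a bipartite state. -/
noncomputable def bipImaxTilde {a b : Type*} [Fintype a] [DecidableEq a]
    [Fintype b] [DecidableEq b] (ε : ℝ) (ρ : Matrix (a × b) (a × b) ℂ) : ℝ :=
  sInf {d : ℝ | ∃ ρ' : Matrix (a × b) (a × b) ℂ, IsState ρ' ∧ purDist ρ' ρ ≤ ε ∧
    d = dMax ρ' (ptraceB ρ' ⊗ₖ ptraceA ρ)}

/-- The binary entropy function. -/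
noncomputable def binEnt (ε : ℝ) : ℝ :=
  -(ε * Real.logb 2 ε) - (1 - ε) * Real.logb 2 (1 - ε)

/-- Hypothesis testing relative entropy `D_H^ε(ρ‖σ)`. -/
noncomputable def dH {n : Type*} [Fintype n] [DecidableEq n] (ε : ℝ) (ρ σ : Matrix n n ℂ) : ℝ :=
  sSup {d : ℝ | ∃ Λ : Matrix n n ℂ, Λ.PosSemidef ∧ (1 - Λ).PosSemidef ∧
    1 - ε ≤ ((Λ * ρ).trace).re ∧ d = -Real.logb 2 (((Λ * σ).trace).re)}

/-- The convex-split state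
`τ^{XAB₁…Bₙ} = Σ_x p(x)|x⟩⟨x| ⊗ (1/n) Σ_j ρ_x^{AB_j} ⊗ (⊗_{i≠j} σ_x^{B_i})`,
written entrywise on the index type `X × (A × Bⁿ)`. -/
noncomputable def tauState {X a b : Type*} [Fintype X] [DecidableEq X]
    [Fintype a] [Fintype b]
    (p : X → ℝ) (ρ : X → Matrix (a × b) (a × b) ℂ) (σ : X → Matrix b b ℂ) (nn : ℕ) :
    Matrix (X × (a × (Fin nn → b))) (X × (a × (Fin nn → b))) ℂ :=
  Matrix.of fun q q' =>
    (if q.1 = q'.1 then (p q.1 : ℂ) else 0) *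
      ((nn : ℂ)⁻¹ * ∑ j : Fin nn,
        ρ q.1 (q.2.1, q.2.2 j) (q'.2.1, q'.2.2 j) *
          ∏ i ∈ Finset.univ.erase j, σ q.1 (q.2.2 i) (q'.2.2 i))

/-- The product reference state
`Σ_x p(x)|x⟩⟨x| ⊗ ρ_x^A ⊗ σ_x^{B₁} ⊗ … ⊗ σ_x^{Bₙ}`, entrywise. -/
noncomputable def refState {X a b : Type*} [Fintype X] [DecidableEq X]
    [Fintype a] [Fintype b]
    (p : X → ℝ) (ρ : X → Matrix (a × b) (a × b) ℂ) (σ : X → Matrix b b ℂ) (nn : ℕ) :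
    Matrix (X × (a × (Fin nn → b))) (X × (a × (Fin nn → b))) ℂ :=
  Matrix.of fun q q' =>
    (if q.1 = q'.1 then (p q.1 : ℂ) else 0) *
      (ptraceB (ρ q.1) q.2.1 q'.2.1 * ∏ i : Fin nn, σ q.1 (q.2.2 i) (q'.2.2 i))


/-- Positive semidefinite square root (the one used in `psqrt`). -/
@[irreducible]
noncomputable def _root_.Matrix.PosSemidef.sqrt {n : Type*} [Fintype n] [DecidableEq n]
    {A : Matrix n n ℂ} (h : A.PosSemidef) : Matrix n n ℂ :=
  (h.1.eigenvectorUnitary : Matrix n n ℂ) *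
    Matrix.diagonal ((↑) ∘ (Real.sqrt ·) ∘ h.1.eigenvalues) *
    (star (h.1.eigenvectorUnitary : Matrix n n ℂ))

lemma _root_.Matrix.PosSemidef.posSemidef_sqrt {n : Type*} [Fintype n] [DecidableEq n]
    {A : Matrix n n ℂ} (h : A.PosSemidef) : h.sqrt.PosSemidef := by
  have hD : (Matrix.diagonal ((↑) ∘ (Real.sqrt ·) ∘ h.1.eigenvalues) : Matrix n n ℂ).PosSemidef := by
    apply PosSemidef.diagonal
    intro i
    simp only [Pi.zero_apply, Function.comp_apply]
    exact_mod_cast Real.sqrt_nonneg _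
  have := hD.mul_mul_conjTranspose_same (h.1.eigenvectorUnitary : Matrix n n ℂ)
  rw [Matrix.PosSemidef.sqrt]
  rwa [← star_eq_conjTranspose] at this

lemma _root_.Matrix.PosSemidef.sqrt_mul_self {n : Type*} [Fintype n] [DecidableEq n]
    {A : Matrix n n ℂ} (h : A.PosSemidef) : h.sqrt * h.sqrt = A := by
  set U : Matrix n n ℂ := (h.1.eigenvectorUnitary : Matrix n n ℂ) with hU
  have hUU : star U * U = 1 := Unitary.coe_star_mul_self _
  have hdd : (Matrix.diagonal ((↑) ∘ (Real.sqrt ·) ∘ h.1.eigenvalues) : Matrix n n ℂ) *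
      Matrix.diagonal ((↑) ∘ (Real.sqrt ·) ∘ h.1.eigenvalues)
      = Matrix.diagonal (RCLike.ofReal ∘ h.1.eigenvalues) := by
    rw [diagonal_mul_diagonal]
    congr 1
    funext i
    simp only [Function.comp_apply]
    rw [← Complex.ofReal_mul, Real.mul_self_sqrt (h.eigenvalues_nonneg i)]
    rfl
  unfold Matrix.PosSemidef.sqrt
  rw [← hU]
  conv_rhs => rw [h.1.spectral_theorem, Unitary.conjStarAlgAut_apply]
  rw [← hU]
  calc U * Matrix.diagonal ((↑) ∘ (Real.sqrt ·) ∘ h.1.eigenvalues) * star U *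
        (U * Matrix.diagonal ((↑) ∘ (Real.sqrt ·) ∘ h.1.eigenvalues) * star U)
      = U * (Matrix.diagonal ((↑) ∘ (Real.sqrt ·) ∘ h.1.eigenvalues) * (star U * U) *
        Matrix.diagonal ((↑) ∘ (Real.sqrt ·) ∘ h.1.eigenvalues)) * star U := by
        simp only [Matrix.mul_assoc]
    _ = _ := by rw [hUU, Matrix.mul_one, hdd]

private lemma psd_csmul {d : Type*} [Fintype d] {r : ℝ} (hr : 0 ≤ r)
    {A : Matrix d d ℂ} (hA : A.PosSemidef) : ((r : ℂ) • A).PosSemidef := by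
  refine PosSemidef.of_dotProduct_mulVec_nonneg ?_ ?_
  · unfold Matrix.IsHermitian
    rw [conjTranspose_smul, hA.1.eq, Complex.star_def, Complex.conj_ofReal]
  · intro x
    rw [smul_mulVec, dotProduct_smul, smul_eq_mul]
    exact mul_nonneg (by exact_mod_cast hr) (hA.dotProduct_mulVec_nonneg x)

private lemma sq_le_sq_psd {d : Type*} [Fintype d] [DecidableEq d] {A B : Matrix d d ℂ}
    (hA : A.PosSemidef) (hB : B.PosSemidef) (h : (B * B - A * A).PosSemidef) :
    (B - A).PosSemidef := by
  have hH : (B - A).IsHermitian := hB.1.sub hA.1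
  apply hH.posSemidef_iff_eigenvalues_nonneg.mpr
  intro i
  by_contra hlt
  push_neg at hlt
  set t := hH.eigenvalues i with htdef
  set v : d → ℂ := ⇑(hH.eigenvectorBasis i) with hvdef
  have hv : (B - A) *ᵥ v = t • v := hH.mulVec_eigenvectorBasis i
  have hvne : v ≠ 0 := fun h0 => hH.eigenvectorBasis.orthonormal.ne_zero i (by simpa [hvdef] using h0)
  have hsv : (star v) ᵥ* (B - A) = (t:ℂ) • star v := by
    have hst := star_mulVec (B - A) v
    rw [hH, hv] at hst
    rw [← hst]
    ext j
    simp [Complex.real_smul]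
  have key : star v ⬝ᵥ (B * B - A * A) *ᵥ v
      = (t : ℂ) * (star v ⬝ᵥ B *ᵥ v + star v ⬝ᵥ A *ᵥ v) := calc
    star v ⬝ᵥ (B * B - A * A) *ᵥ v
        = star v ⬝ᵥ B *ᵥ (B - A) *ᵥ v + star v ⬝ᵥ (B - A) *ᵥ A *ᵥ v := by
      rw [mulVec_mulVec, mulVec_mulVec, ← dotProduct_add, ← add_mulVec, mul_sub, sub_mul,
        sub_add_sub_cancel]
    _ = (t:ℂ) * (star v ⬝ᵥ B *ᵥ v) + ((t:ℂ) • star v) ⬝ᵥ A *ᵥ v := by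
      rw [hv, mulVec_smul, dotProduct_smul, RCLike.real_smul_eq_coe_mul,
        dotProduct_mulVec _ (B - A), hsv]
      rfl
    _ = (t:ℂ) * (star v ⬝ᵥ B *ᵥ v + star v ⬝ᵥ A *ᵥ v) := by
      rw [smul_dotProduct, smul_eq_mul, mul_add]
  have hq : (0:ℂ) ≤ star v ⬝ᵥ B *ᵥ v + star v ⬝ᵥ A *ᵥ v := add_nonneg (hB.dotProduct_mulVec_nonneg v) (hA.dotProduct_mulVec_nonneg v)
  have hprod : (0:ℂ) ≤ (t : ℂ) * (star v ⬝ᵥ B *ᵥ v + star v ⬝ᵥ A *ᵥ v) := key ▸ h.dotProduct_mulVec_nonneg v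
  have htneg : (t:ℂ) ≤ 0 := by exact_mod_cast hlt.le
  have hzero : star v ⬝ᵥ B *ᵥ v + star v ⬝ᵥ A *ᵥ v = 0 := by
    have := mul_nonpos_of_nonpos_of_nonneg htneg hq
    have h0 : (t:ℂ) * (star v ⬝ᵥ B *ᵥ v + star v ⬝ᵥ A *ᵥ v) = 0 := le_antisymm this hprod
    have htne : (t:ℂ) ≠ 0 := by exact_mod_cast hlt.ne
    exact (mul_eq_zero.mp h0).resolve_left htne
  have hvan : star v ⬝ᵥ B *ᵥ v = 0 ∧ star v ⬝ᵥ A *ᵥ v = 0 :=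
    (add_eq_zero_iff_of_nonneg (hB.dotProduct_mulVec_nonneg v) (hA.dotProduct_mulVec_nonneg v)).mp hzero
  have haux : star v ⬝ᵥ (B - A) *ᵥ v = 0 := by
    rw [sub_mulVec, dotProduct_sub, hvan.1, hvan.2, sub_zero]
  rw [hv, dotProduct_smul, RCLike.real_smul_eq_coe_mul] at haux
  have htne : (t:ℂ) ≠ 0 := by exact_mod_cast hlt.ne
  exact hvne <| dotProduct_star_self_eq_zero.mp <| (mul_eq_zero.mp haux).resolve_left htne


set_option maxHeartbeats 2000000 in
/-- Hayashi–Nagaoka operator inequality. -/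
theorem hayashi_nagaoka {d : Type*} [Fintype d] [DecidableEq d]
    (S T : Matrix d d ℂ) (hS : S.PosSemidef) (hT : T.PosSemidef)
    (hS1 : LLE S 1) (hST : (S + T).PosDef) (c : ℝ) (hc : 0 < c) :
    LLE (1 - (psqrt (S + T))⁻¹ * S * (psqrt (S + T))⁻¹)
      ((1 + c) • (1 - S) + (2 + c + c⁻¹) • T) := by
  have h1S : (1 - S).PosSemidef := hS1
  have hPsd : (S + T).PosSemidef := hST.posSemidef
  set N : Matrix d d ℂ := hPsd.sqrt with hNdef
  have hpsqrt : psqrt (S + T) = N := by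
    unfold psqrt
    rw [dif_pos hPsd]
    rw [hNdef, Matrix.PosSemidef.sqrt]
  rw [LLE.eq_def, hpsqrt]
  -- basic facts about N
  have hNpsd : N.PosSemidef := hPsd.posSemidef_sqrt
  have hNH : Nᴴ = N := hNpsd.1
  have hNN : N * N = S + T := hPsd.sqrt_mul_self
  have hdet : IsUnit N.det := by
    have h2 : N.det * N.det = (S + T).det := by rw [← det_mul, hNN]
    have : IsUnit ((S + T).det) := hST.det_pos.ne'.isUnit
    rw [← h2] at this
    exact isUnit_of_mul_isUnit_left this
  have h1 : N⁻¹ * N = 1 := nonsing_inv_mul N hdet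
  have h2 : N * N⁻¹ = 1 := mul_nonsing_inv N hdet
  have hNiH : (N⁻¹)ᴴ = N⁻¹ := hNpsd.1.inv
  have hc1 : ∀ X : Matrix d d ℂ, N * (N⁻¹ * X) = X := fun X => by
    rw [← Matrix.mul_assoc, h2, Matrix.one_mul]
  have hc2 : ∀ X : Matrix d d ℂ, N⁻¹ * (N * X) = X := fun X => by
    rw [← Matrix.mul_assoc, h1, Matrix.one_mul]
  -- real smul to complex smul
  have cast : ∀ (r : ℝ) (M : Matrix d d ℂ), r • M = (r : ℂ) • M := fun r M => by
    ext i j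
    simp [Complex.real_smul]
  -- the key relation  N⁻¹ S N⁻¹ + N⁻¹ T N⁻¹ = 1
  have hr1 : N⁻¹ * (T * N⁻¹) = 1 - N⁻¹ * (S * N⁻¹) := by
    have : N⁻¹ * (S * N⁻¹) + N⁻¹ * (T * N⁻¹) = 1 := by
      rw [← Matrix.mul_add, ← Matrix.add_mul, ← hNN, Matrix.mul_assoc, h2, Matrix.mul_one, h1]
    linear_combination (norm := abel) this
  -- S ≤ N
  have hNS : (N - S).PosSemidef := by
    apply sq_le_sq_psd hS hNpsd
    have e2 : hS.sqrt * (1 - S) * hS.sqrt = S - S * S := by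
      have hss : hS.sqrt * hS.sqrt = S := hS.sqrt_mul_self
      rw [Matrix.mul_sub, Matrix.mul_one, Matrix.sub_mul, hss]
      congr 1
      calc hS.sqrt * S * hS.sqrt = hS.sqrt * (hS.sqrt * hS.sqrt) * hS.sqrt := by rw [hss]
        _ = (hS.sqrt * hS.sqrt) * (hS.sqrt * hS.sqrt) := by
            simp only [Matrix.mul_assoc]
        _ = S * S := by rw [hss]
    have hpos : (hS.sqrt * (1 - S) * hS.sqrt + T).PosSemidef := by
      refine PosSemidef.add ?_ hT
      have := h1S.conjTranspose_mul_mul_same hS.sqrt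
      rwa [hS.posSemidef_sqrt.1.eq] at this
    have : N * N - S * S = hS.sqrt * (1 - S) * hS.sqrt + T := by
      rw [hNN, e2]
      abel
    rwa [this]
  -- the PSD piece from the cross terms
  set g : ℂ := (Real.sqrt c : ℂ) with hgdef
  have hg : g * g = (c : ℂ) := by
    rw [hgdef, ← Complex.ofReal_mul, Real.mul_self_sqrt hc.le]
  have hgne : g ≠ 0 := by
    rw [hgdef]
    exact_mod_cast (Real.sqrt_pos.mpr hc).ne'
  have hgg : g * g⁻¹ = 1 := mul_inv_cancel₀ hgne
  have hgg' : g⁻¹ * g = 1 := inv_mul_cancel₀ hgne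
  have hg' : g⁻¹ * g⁻¹ = (c : ℂ)⁻¹ := by
    rw [← mul_inv, hg]
  set R : Matrix d d ℂ := hT.sqrt with hRdef
  have hRH : Rᴴ = R := hT.posSemidef_sqrt.1
  have hRR : R * R = T := hT.sqrt_mul_self
  have hRc : ∀ X : Matrix d d ℂ, R * (R * X) = T * X := fun X => by
    rw [← Matrix.mul_assoc, hRR]
  set Z : Matrix d d ℂ := g • (R * (1 - N)) - g⁻¹ • (R * N) with hZdef
  have hQ1 : (Zᴴ * Z).PosSemidef := posSemidef_conjTranspose_mul_self Z
  have hZZ : Zᴴ * Z = (c:ℂ) • ((1 - N) * T * (1 - N)) + (c:ℂ)⁻¹ • (N * T * N)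
      - ((1 - N) * (T * N) + N * (T * (1 - N))) := by
    rw [hZdef]
    simp only [conjTranspose_sub, conjTranspose_smul, conjTranspose_mul, conjTranspose_one,
      hRH, hNH, Complex.star_def, map_inv₀, Complex.conj_ofReal, hgdef]
    simp only [← hgdef, sub_mul, mul_sub, Matrix.smul_mul, Matrix.mul_smul, smul_smul,
      hg, hg', hgg, hgg', one_smul, Matrix.mul_one, Matrix.one_mul, Matrix.mul_assoc, hRc, hRR]
    match_scalars <;> (ring_nf; simp [hgdef, ← Complex.ofReal_pow, Real.sq_sqrt hc.le,
      Real.sqrt_eq_zero', hc.le, hc.ne']) <;> ring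
  -- main identity after conjugation by N
  have hG : ((1+c:ℝ):ℂ) • S + ((c:ℝ):ℂ) • T + ((2+c+c⁻¹:ℝ):ℂ) • (N * (T * N))
        - ((1+c:ℝ):ℂ) • (N * (S * N))
      = Zᴴ * Z + ((1+c:ℝ):ℂ) • ((1 - N) * S * (1 - N))
        + ((1+c:ℝ):ℂ) • (N * ((N - S) * N)) + ((1+c:ℝ):ℂ) • ((N * (N - S)) * N) := by
    rw [hZZ]
    push_cast
    simp only [sub_mul, mul_sub, Matrix.smul_mul, Matrix.mul_smul, smul_smul, smul_sub, smul_add,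
      Matrix.mul_one, Matrix.one_mul, Matrix.mul_assoc, hNN, mul_add, add_mul]
    module
  have hGpsd : (((1+c:ℝ):ℂ) • S + ((c:ℝ):ℂ) • T + ((2+c+c⁻¹:ℝ):ℂ) • (N * (T * N))
      - ((1+c:ℝ):ℂ) • (N * (S * N))).PosSemidef := by
    rw [hG]
    have h1c : (0:ℝ) ≤ 1 + c := by linarith
    have hp2 : ((1 - N) * S * (1 - N)).PosSemidef := by
      have h1N : (1 - N)ᴴ = 1 - N := by rw [conjTranspose_sub, conjTranspose_one, hNH]
      have := hS.conjTranspose_mul_mul_same (1 - N)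
      rwa [h1N] at this
    have hp3 : (N * ((N - S) * N)).PosSemidef := by
      have := hNS.conjTranspose_mul_mul_same N
      rwa [hNH, Matrix.mul_assoc] at this
    have hp4 : ((N * (N - S)) * N).PosSemidef := by
      have := hNS.conjTranspose_mul_mul_same N
      rwa [hNH] at this
    exact ((((hQ1.add (psd_csmul h1c hp2))).add (psd_csmul h1c hp3)).add (psd_csmul h1c hp4))
  -- undo the conjugation
  have hfinal := hGpsd.mul_mul_conjTranspose_same N⁻¹
  rw [hNiH] at hfinal
  have heq : N⁻¹ * (((1+c:ℝ):ℂ) • S + ((c:ℝ):ℂ) • T + ((2+c+c⁻¹:ℝ):ℂ) • (N * (T * N))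
        - ((1+c:ℝ):ℂ) • (N * (S * N))) * N⁻¹
      = (1 + c) • (1 - S) + (2 + c + c⁻¹) • T - (1 - N⁻¹ * S * N⁻¹) := by
    rw [cast, cast]
    push_cast
    simp only [sub_mul, mul_sub, add_mul, mul_add, Matrix.smul_mul, Matrix.mul_smul, smul_smul,
      smul_sub, smul_add, Matrix.mul_one, Matrix.one_mul, Matrix.mul_assoc, hc1, hc2, h1, h2, hr1]
    module
  rwa [heq] at hfinal

end Paper
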